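/- Every automorphism of the graph 12⁹₁ preserves the 6-cycle K = a₁a₂a₃b₁b₂b₃a₁ setwise, and the automorphism group of 12⁹₁ has order at most 2. -/

import Mathlib

/-- The vertices of the graph `12⁹₁`. -/
inductive V91 : Type
  | a1 | a2 | a3 | b1 | b2 | b3 | v | w1 | w2
  deriving DecidableEq

open V91 in
instance : Fintype V91 where
  elems := {a1, a2, a3, b1, b2, b3, v, w1, w2}
  complete := by intro x; cases x <;> decide

open V91 in
/-- The graph `12⁹₁`: the 6-cycle `a₁a₂a₃b₁b₂b₃a₁`, the chords `a₁b₁`, `a₃b₃`, the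
edges `va₂`, `vb₂`, and the pendant edges `w₁a₁`, `w₂b₁` (12 edges in all; the chord
`a₂b₂` of the Möbius ladder arises through the degree-2 vertex `v`).
Here `a₁, b₁` have degree 4, `a₂, a₃, b₂, b₃` degree 3, `v` degree 2 and `w₁, w₂` degree 1. -/
def graph1291 : SimpleGraph V91 :=
  SimpleGraph.fromRel (fun x y => (x, y) ∈
    [(a1, a2), (a2, a3), (a3, b1), (b1, b2), (b2, b3), (b3, a1),
     (a1, b1), (a3, b3), (v, a2), (v, b2), (w1, a1), (w2, b1)])

open V91

instance instDecAdj1291 : DecidableRel graph1291.Adj := fun a b =>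
  decidable_of_iff' _ (SimpleGraph.fromRel_adj _ a b)

lemma deg_eq1291 (φ : graph1291 ≃g graph1291) (x : V91) :
    graph1291.degree (φ x) = graph1291.degree x := by
  rw [← SimpleGraph.card_neighborSet_eq_degree, ← SimpleGraph.card_neighborSet_eq_degree]
  exact (Fintype.card_congr (φ.mapNeighborSet x)).symm

lemma fix1291 (φ : graph1291 ≃g graph1291) (h : φ a1 = a1) : ∀ x, φ x = x := by
  have hd := deg_eq1291 φ
  have hadj : ∀ x y, graph1291.Adj (φ x) (φ y) ↔ graph1291.Adj x y := fun x y => φ.map_adj_iff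
  have hb1 : φ b1 = b1 := by
    have h4 : graph1291.degree (φ b1) = 4 := by rw [hd]; decide
    have hne : φ b1 ≠ a1 := fun he => by
      have := φ.injective (he.trans h.symm); exact absurd this (by decide)
    revert h4 hne; generalize φ b1 = y; revert y; decide
  have hv : φ v = v := by
    have h2 : graph1291.degree (φ v) = 2 := by rw [hd]; decide
    revert h2; generalize φ v = y; revert y; decide
  have hw1 : φ w1 = w1 := by
    have h1 : graph1291.degree (φ w1) = 1 := by rw [hd]; decide
    have ha : graph1291.Adj a1 (φ w1) := by
      have := (hadj a1 w1).mpr (by decide); rwa [h] at this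
    revert h1 ha; generalize φ w1 = y; revert y; decide
  have hw2 : φ w2 = w2 := by
    have h1 : graph1291.degree (φ w2) = 1 := by rw [hd]; decide
    have ha : graph1291.Adj b1 (φ w2) := by
      have := (hadj b1 w2).mpr (by decide); rwa [hb1] at this
    revert h1 ha; generalize φ w2 = y; revert y; decide
  have ha2 : φ a2 = a2 := by
    have ha : graph1291.Adj a1 (φ a2) := by
      have := (hadj a1 a2).mpr (by decide); rwa [h] at this
    have hvv : graph1291.Adj v (φ a2) := by
      have := (hadj v a2).mpr (by decide); rwa [hv] at this
    revert ha hvv; generalize φ a2 = y; revert y; decide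
  have hb2 : φ b2 = b2 := by
    have ha : graph1291.Adj b1 (φ b2) := by
      have := (hadj b1 b2).mpr (by decide); rwa [hb1] at this
    have hvv : graph1291.Adj v (φ b2) := by
      have := (hadj v b2).mpr (by decide); rwa [hv] at this
    revert ha hvv; generalize φ b2 = y; revert y; decide
  have ha3 : φ a3 = a3 := by
    have ha : graph1291.Adj a2 (φ a3) := by
      have := (hadj a2 a3).mpr (by decide); rwa [ha2] at this
    have h3 : graph1291.degree (φ a3) = 3 := by rw [hd]; decide
    have hne : φ a3 ≠ a1 := fun he => by
      have := φ.injective (he.trans h.symm); exact absurd this (by decide)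
    revert ha h3 hne; generalize φ a3 = y; revert y; decide
  have hb3 : φ b3 = b3 := by
    have ha : graph1291.Adj b2 (φ b3) := by
      have := (hadj b2 b3).mpr (by decide); rwa [hb2] at this
    have h3 : graph1291.degree (φ b3) = 3 := by rw [hd]; decide
    have hne : φ b3 ≠ b1 := fun he => by
      have := φ.injective (he.trans hb1.symm); exact absurd this (by decide)
    revert ha h3 hne; generalize φ b3 = y; revert y; decide
  intro x; cases x <;> assumption

open V91 in
/-- Every automorphism of `12⁹₁` preserves the 6-cycle `K = a₁a₂a₃b₁b₂b₃a₁` setwise,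
and the automorphism group of `12⁹₁` has order at most 2. -/
theorem stmt14 :
    (∀ φ : graph1291 ≃g graph1291,
      (fun x => φ x) '' {a1, a2, a3, b1, b2, b3} = {a1, a2, a3, b1, b2, b3}) ∧
    Nat.card (graph1291 ≃g graph1291) ≤ 2 := by
  have hK : ∀ (φ : graph1291 ≃g graph1291) x,
      x ∈ ({a1, a2, a3, b1, b2, b3} : Set V91) → φ x ∈ ({a1, a2, a3, b1, b2, b3} : Set V91) := by
    intro φ x hx
    simp only [Set.mem_insert_iff, Set.mem_singleton_iff] at hx ⊢
    have h3 : 3 ≤ graph1291.degree (φ x) := by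
      rw [deg_eq1291]
      rcases hx with rfl | rfl | rfl | rfl | rfl | rfl <;> decide
    revert h3; generalize φ x = y; revert y; decide
  constructor
  · intro φ
    apply Set.eq_of_subset_of_subset
    · rintro y ⟨x, hx, rfl⟩; exact hK φ x hx
    · intro y hy
      exact ⟨φ.symm y, hK φ.symm y hy, φ.apply_symm_apply y⟩
  · have hf : Function.Injective (fun φ : graph1291 ≃g graph1291 => (φ a1 = a1 : Bool)) := by
      intro φ ψ hb
      have hcases : ∀ χ : graph1291 ≃g graph1291, χ a1 = a1 ∨ χ a1 = b1 := by
        intro χ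
        have h4 : graph1291.degree (χ a1) = 4 := by rw [deg_eq1291]; decide
        revert h4; generalize χ a1 = y; revert y; decide
      have heq : φ a1 = ψ a1 := by
        simp only [decide_eq_decide] at hb
        rcases hcases φ with h1 | h1 <;> rcases hcases ψ with h2 | h2 <;>
          simp_all
      have key := fix1291 (φ.trans ψ.symm) (by
        show ψ.symm (φ a1) = a1
        rw [heq, ψ.symm_apply_apply])
      apply DFunLike.ext
      intro x
      have hx : ψ.symm (φ x) = x := key x
      calc φ x = ψ (ψ.symm (φ x)) := (ψ.apply_symm_apply _).symm
        _ = ψ x := by rw [hx]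
    calc Nat.card (graph1291 ≃g graph1291) ≤ Nat.card Bool :=
          Nat.card_le_card_of_injective _ hf
      _ = 2 := by simp [Nat.card_eq_fintype_card]
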